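/- arXiv:1408.2110 — 3 statements merged into one kernel-verified Lean document; each statement's English description precedes it below -/
import Mathlib

section
/- Let x ∈ A^ℤ be a uniformly recurrent sequence and let u be a nonempty prefix of x. Then the set R_{x,u} of return words to u of x is a circular code. -/
open MeasureTheory Filter Matrix Set

namespace PisotDE

variable {A B : Type*}

/-- Extension of a letter-to-word map to words, by concatenation. -/
def wordApply (σ : A → List B) (w : List A) : List B := w.flatMap σ

/-- Iterates of an endomorphism of the free monoid. -/
def substIter (σ : A → List A) : ℕ → A → List A
  | 0 => fun a => [a]
  | n + 1 => fun a => wordApply (substIter σ n) (σ a)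

/-- σ is a substitution: some letter a has σ(a) starting with a, and |σⁿ(b)| → ∞ for all b. -/
def IsSubstitution (σ : A → List A) : Prop :=
  (∃ a, (σ a).head? = some a) ∧
    ∀ b, Tendsto (fun n => (substIter σ n b).length) atTop atTop

/-- Incidence matrix: entry (i,j) counts occurrences of i in σ(j). -/
def incMat [Fintype A] [DecidableEq A] (σ : A → List A) : Matrix A A ℕ :=
  Matrix.of fun i j => (σ j).count i

/-- Primitivity: a power of the incidence matrix has all entries positive. -/
def IsPrimitive [Fintype A] [DecidableEq A] (σ : A → List A) : Prop :=
  ∃ k : ℕ, ∀ i j, 0 < (incMat σ ^ k) i j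

def IsLeftProper (σ : A → List A) : Prop := ∃ a, ∀ b, (σ b).head? = some a
def IsRightProper (σ : A → List A) : Prop := ∃ a, ∀ b, (σ b).getLast? = some a
def IsProper (σ : A → List A) : Prop := IsLeftProper σ ∧ IsRightProper σ

/-- The factor x_{[i, i+len-1]} of a bi-infinite sequence. -/
def subword (x : ℤ → A) (i : ℤ) (len : ℕ) : List A :=
  List.ofFn fun k : Fin len => x (i + (k : ℕ))

/-- Language of a substitution: words occurring in some σⁿ(b). -/
def lang (σ : A → List A) : Set (List A) := { w | ∃ n b, w <:+: substIter σ n b }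

/-- The substitutive subshift Ω_σ. -/
def Omega (σ : A → List A) : Set (ℤ → A) := { x | ∀ i len, subword x i len ∈ lang σ }

/-- The shift map. -/
def shift (x : ℤ → A) : ℤ → A := fun n => x (n + 1)

/-- The subshift generated by the sequence x (all sequences whose factors are factors of x). -/
def OmegaOf (x : ℤ → A) : Set (ℤ → A) :=
  { z | ∀ i len, ∃ j : ℤ, subword z i len = subword x j len }

/-- y is the image of x under the morphism σ acting on bi-infinite sequences,
concatenating around position 0. -/
def SubstPt (σ : A → List B) (x : ℤ → A) (y : ℤ → B) : Prop :=
  ∃ p : ℤ → ℤ, p 0 = 0 ∧ (∀ n, p (n + 1) = p n + (σ (x n)).length) ∧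
    ∀ (n : ℤ) (k : Fin (σ (x n)).length), y (p n + (k : ℕ)) = (σ (x n)).get k

/-- Image of a set of sequences under the substitution. -/
def substImg (σ : A → List A) (X : Set (ℤ → A)) : Set (ℤ → A) :=
  { y | ∃ x ∈ X, SubstPt σ x y }

/-- The cylinder [a] inside Ω_σ. -/
def cylOmega (σ : A → List A) (a : A) : Set (ℤ → A) := { x ∈ Omega σ | x 0 = a }

/-- ξᵐ(Ω_ξ). -/
def towerBase (σ : A → List A) (m : ℕ) : Set (ℤ → A) := substImg (substIter σ m) (Omega σ)

/-- ξᵐ([a]). -/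
def towerCylElem (σ : A → List A) (m : ℕ) (a : A) : Set (ℤ → A) :=
  { y | ∃ x, x ∈ cylOmega σ a ∧ SubstPt (substIter σ m) x y }

/-- The Kakutani-Rohlin piece S^{-k} ξᵐ([a]) (inside Ω_ξ). -/
def krPiece (σ : A → List A) (m : ℕ) (a : A) (k : ℕ) : Set (ℤ → A) :=
  { x ∈ Omega σ | shift^[k] x ∈ towerCylElem σ m a }

/-- Entrance time of x into the base ξ^{n-1}(Ω_ξ). -/
noncomputable def rTime (σ : A → List A) (n : ℕ) (x : ℤ → A) : ℕ :=
  sInf { k : ℕ | shift^[k] x ∈ towerBase σ (n - 1) }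

/-- The vector s_k(x): s_k(x)_a counts the i with r_k(x) < i ≤ r_{k+1}(x)
such that Sⁱx ∈ ξ^{k-1}([a]). -/
noncomputable def sVec (σ : A → List A) (k : ℕ) (x : ℤ → A) : A → ℤ :=
  fun a => (({ i : ℕ | rTime σ k x < i ∧ i ≤ rTime σ (k + 1) x ∧
      shift^[i] x ∈ towerCylElem σ (k - 1) a }).ncard : ℤ)

/-- λ is an eigenvalue of the measure-theoretic system (Ω, S, μ):
there is a nonzero f ∈ L²(μ) with f∘S = λ f. -/
def IsEigenvalue [MeasurableSpace A] (μ : Measure (ℤ → A)) (lam : ℂ) : Prop :=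
  ∃ f : (ℤ → A) → ℂ, MemLp f 2 μ ∧ ¬ f =ᵐ[μ] 0 ∧
    (fun x => f (shift x)) =ᵐ[μ] fun x => lam * f x

/-- Characteristic polynomial of a natural matrix, over ℂ. -/
noncomputable def charpolyC [Fintype A] [DecidableEq A] (M : Matrix A A ℕ) : Polynomial ℂ :=
  (M.map (Nat.cast : ℕ → ℂ)).charpoly

/-- Pisot type: dominant real root β > 1, every other root β' has 0 < |β'| < 1. -/
def IsPisotType [Fintype A] [DecidableEq A] (M : Matrix A A ℕ) : Prop :=
  ∃ β : ℝ, 1 < β ∧ (charpolyC M).IsRoot (β : ℂ) ∧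
    ∀ z : ℂ, (charpolyC M).IsRoot z → z ≠ (β : ℂ) → 0 < ‖z‖ ∧ ‖z‖ < 1

/-- Weakly irreducible Pisot type: the dominant root is a real Pisot number β > 1,
the other roots are algebraic conjugates of β, 0, or roots of unity. -/
def IsWIPisot [Fintype A] [DecidableEq A] (M : Matrix A A ℕ) : Prop :=
  ∃ β : ℝ, 1 < β ∧ (charpolyC M).IsRoot (β : ℂ) ∧
    (∀ z : ℂ, Polynomial.aeval z (minpoly ℚ ((β : ℝ) : ℂ)) = 0 → z ≠ (β : ℂ) → ‖z‖ < 1) ∧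
    ∀ z : ℂ, (charpolyC M).IsRoot z →
      (Polynomial.aeval z (minpoly ℚ ((β : ℝ) : ℂ)) = 0 ∨ z = 0 ∨ ∃ n : ℕ, 0 < n ∧ z ^ n = 1)

/-- Unimodularity: determinant ±1. -/
def IsUnimodular [Fintype A] [DecidableEq A] (M : Matrix A A ℕ) : Prop :=
  (M.map (Nat.cast : ℕ → ℤ)).det = 1 ∨ (M.map (Nat.cast : ℕ → ℤ)).det = -1

/-- The transpose of the incidence matrix, with real entries. -/
noncomputable def MtR [Fintype A] [DecidableEq A] (σ : A → List A) : Matrix A A ℝ :=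
  ((incMat σ).map (Nat.cast : ℕ → ℝ))ᵀ

/-- The vector μ⃗(n), μ⃗(n)_a = μ(ξ^{n-1}([a])). -/
noncomputable def muVec [MeasurableSpace A] (σ : A → List A) (μ : Measure (ℤ → A)) (n : ℕ) : A → ℝ :=
  fun a => (μ (towerCylElem σ (n - 1) a)).toReal

/-- Rational independence of 1, α_1, …, α_m. -/
def RatIndepOne {m : ℕ} (α : Fin m → ℝ) : Prop :=
  ∀ (c₀ : ℤ) (c : Fin m → ℤ), (c₀ : ℝ) + ∑ i, (c i : ℝ) * α i = 0 →
    c₀ = 0 ∧ ∀ i, c i = 0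

/-- The word u occurs in x at position i. -/
def occursAt (x : ℤ → A) (u : List A) (i : ℤ) : Prop :=
  ∀ k : Fin u.length, x (i + (k : ℕ)) = u.get k

/-- Uniform recurrence: every factor occurs with bounded gaps. -/
def UniformlyRecurrent (x : ℤ → A) : Prop :=
  ∀ u : List A, (∃ i, occursAt x u i) →
    ∃ N : ℕ, ∀ i : ℤ, ∃ j : ℤ, i ≤ j ∧ j < i + (N : ℤ) ∧ occursAt x u j

/-- Return words to u of x. -/
def returnWords (x : ℤ → A) (u : List A) : Set (List A) :=
  { w | ∃ i j : ℤ, i < j ∧ occursAt x u i ∧ occursAt x u j ∧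
      (∀ l : ℤ, i < l → l < j → ¬ occursAt x u l) ∧ w = subword x i (j - i).toNat }

/-- Circular code. -/
def IsCircularCode (R : Set (List A)) : Prop :=
  ∀ (l l' : List (List A)) (w s t : List A),
    (∀ v ∈ l, v ∈ R) → (∀ v ∈ l', v ∈ R) → w ∈ R → s ≠ [] →
    w = t ++ s → l.flatten = s ++ l'.flatten ++ t → t = []

/-- p : ℤ → ℤ enumerates increasingly all occurrences of u in x, with p 0 = 0. -/
def IsOccEnum (x : ℤ → A) (u : List A) (p : ℤ → ℤ) : Prop :=
  p 0 = 0 ∧ StrictMono p ∧ (∀ n, occursAt x u (p n)) ∧ ∀ i, occursAt x u i → ∃ n, p n = i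

/-- The n-th return word m_n in the decomposition of x along occurrences p. -/
def retWordAt (x : ℤ → A) (p : ℤ → ℤ) (n : ℤ) : List A :=
  subword x (p n) (p (n + 1) - p n).toNat

/-- (Θ, y) is the canonical return-word coding of x on u:
Θ = Θ_{x,u} (on the letters occurring in y) and y = D_u(x), the derived sequence,
with letters 0,1,2,… given to return words in order of first appearance in (m_i)_{i ≥ 0}. -/
def IsReturnCoding (x : ℤ → A) (u : List A) (Θ : ℕ → List A) (y : ℤ → ℕ) : Prop :=
  ∃ p : ℤ → ℤ, IsOccEnum x u p ∧
    (∀ n : ℤ, Θ (y n) = retWordAt x p n) ∧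
    (∀ n m : ℤ, y n = y m ↔ retWordAt x p n = retWordAt x p m) ∧
    (∀ n : ℤ, ∃ m : ℕ, y m = y n) ∧
    (∀ n : ℕ, y n ≤ Set.ncard { k : ℕ | ∃ m : ℕ, m < n ∧ y m = k })

/-- Letters actually used by a derived sequence. -/
def usedLetters (y : ℤ → ℕ) : Set ℕ := { k | ∃ n : ℤ, y n = k }

/-- Primitivity of a substitution restricted to a set of letters. -/
def IsPrimitiveOn (τ : B → List B) (L : Set B) : Prop :=
  ∃ k : ℕ, 0 < k ∧ ∀ a ∈ L, ∀ b ∈ L, b ∈ substIter τ k a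

/-- τ is the return substitution σ_u, i.e. Θ ∘ τ = σ ∘ Θ on the used letters. -/
def IsReturnSubst (σ : A → List A) (x : ℤ → A) (u : List A)
    (Θ : ℕ → List A) (y : ℤ → ℕ) (τ : ℕ → List ℕ) : Prop :=
  IsReturnCoding x u Θ y ∧
    ∀ k ∈ usedLetters y, (∀ j ∈ τ k, j ∈ usedLetters y) ∧
      wordApply Θ (τ k) = wordApply σ (Θ k)

/-- x is not periodic for the shift. -/
def NotShiftPeriodic (x : ℤ → A) : Prop := ¬ ∃ p : ℤ, p ≠ 0 ∧ ∀ n, x (n + p) = x n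

/-- The splitting ℝ^A = E⁰ ⊕ Eˢ ⊕ Eᵘ ⊕ Eᵇ into M_ξᵗ-invariant subspaces, with
E⁰ killed by M_ξᵗ, Eˢ contracted to 0 but never killed, Eᵘ expanded, Eᵇ bounded
away from 0 and ∞ and never killed. -/
def IsStableSplitting [Fintype A] [DecidableEq A] (σ : A → List A)
    (E0 Es Eu Eb : Submodule ℝ (A → ℝ)) : Prop :=
  (∀ x : A → ℝ, ∃ x0 ∈ E0, ∃ xs ∈ Es, ∃ xu ∈ Eu, ∃ xb ∈ Eb, x = x0 + xs + xu + xb) ∧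
  (∀ x0 ∈ E0, ∀ xs ∈ Es, ∀ xu ∈ Eu, ∀ xb ∈ Eb,
      x0 + xs + xu + xb = 0 → x0 = 0 ∧ xs = 0 ∧ xu = 0 ∧ xb = 0) ∧
  (∀ v ∈ Es, (MtR σ).mulVec v ∈ Es) ∧ (∀ v ∈ Eu, (MtR σ).mulVec v ∈ Eu) ∧
  (∀ v ∈ Eb, (MtR σ).mulVec v ∈ Eb) ∧
  (∀ v ∈ E0, (MtR σ).mulVec v = 0) ∧
  (∀ v ∈ Es, v ≠ 0 → Tendsto (fun k => (MtR σ ^ k).mulVec v) atTop (nhds 0) ∧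
      ∀ n, (MtR σ ^ n).mulVec v ≠ 0) ∧
  (∀ v ∈ Eu, v ≠ 0 → Tendsto (fun k => ‖(MtR σ ^ k).mulVec v‖) atTop atTop) ∧
  (∀ v ∈ Eb, v ≠ 0 → (∃ c C : ℝ, 0 < c ∧ ∀ k : ℕ, c ≤ ‖(MtR σ ^ k).mulVec v‖ ∧
      ‖(MtR σ ^ k).mulVec v‖ ≤ C) ∧ ∀ n, (MtR σ ^ n).mulVec v ≠ 0)

/-- The map F(x) = (Σ_{k ≥ 1} ⟨s_k(x), (M_ξᵗ)ᵏ v(i)⟩)_{1 ≤ i ≤ m}. -/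
noncomputable def Fmap [Fintype A] [DecidableEq A] (σ : A → List A) {m : ℕ}
    (v : Fin m → A → ℝ) (x : ℤ → A) : Fin m → ℝ :=
  fun i => ∑' k : ℕ,
    dotProduct (fun a => ((sVec σ (k + 1) x a : ℤ) : ℝ)) ((MtR σ ^ (k + 1)).mulVec (v i))

/-- The canonical projection ℝ^m → ℝ^m/ℤ^m = 𝕋^m. -/
noncomputable def torusProj {m : ℕ} (z : Fin m → ℝ) : Fin m → AddCircle (1 : ℝ) :=
  fun i => (z i : AddCircle (1 : ℝ))


/-! ### Auxiliary material for the circular code theorem -/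

section CircularAux

variable {α : Type*}

private lemma prefix_of_prefix_append' {u a z : List α} (h : u <+: a ++ z)
    (hlen : u.length ≤ a.length) : u <+: a := by
  rw [List.prefix_iff_eq_take] at h ⊢
  rwa [List.take_append, Nat.sub_eq_zero_of_le hlen,
    List.take_zero, List.append_nil] at h

/-- `v` concatenated with itself `m` times. -/
private def powL (m : ℕ) (v : List α) : List α := (List.replicate m v).flatten

private lemma powL_zero (v : List α) : powL 0 v = [] := rfl

private lemma powL_succ (m : ℕ) (v : List α) : powL (m + 1) v = v ++ powL m v := by
  simp [powL, List.replicate_succ]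

private lemma powL_length (m : ℕ) (v : List α) : (powL m v).length = m * v.length := by
  induction m with
  | zero => simp [powL_zero]
  | succ m ih => rw [powL_succ]; simp [ih]; ring

private lemma flatten_powL (m : ℕ) (c : List (List α)) :
    (powL m c).flatten = powL m c.flatten := by
  induction m with
  | zero => simp [powL_zero]
  | succ m ih => rw [powL_succ, powL_succ, List.flatten_append, ih]

private lemma powL_rotate (m : ℕ) (s v : List α) :
    powL m (s ++ v) ++ s = s ++ powL m (v ++ s) := by
  induction m with
  | zero => simp [powL_zero]
  | succ m ih =>
    rw [powL_succ, powL_succ, List.append_assoc, ih]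
    simp [List.append_assoc]

private lemma lemA {u : List α} {R : Set (List α)}
    (h2 : ∀ w ∈ R, u <+: w ++ u) :
    ∀ l : List (List α), (∀ v ∈ l, v ∈ R) → u <+: l.flatten ++ u := by
  intro l
  induction l with
  | nil => intro _; simp
  | cons r l ih =>
    intro hl
    obtain ⟨z, hz⟩ := ih (fun v hv => hl v (List.mem_cons_of_mem _ hv))
    have h := (h2 r (hl r (List.mem_cons_self))).trans (List.prefix_append (r ++ u) z)
    rw [List.append_assoc, hz] at h
    simpa [List.append_assoc] using h

private lemma lemB {u : List α} {R : Set (List α)}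
    (h2 : ∀ w ∈ R, u <+: w ++ u)
    (h3 : ∀ w ∈ R, ∀ q ≤ w.length, u <+: (w ++ u).drop q → q = 0 ∨ q = w.length) :
    ∀ l : List (List α), (∀ v ∈ l, v ∈ R) → ∀ q, q ≤ l.flatten.length →
      u <+: (l.flatten ++ u).drop q →
      ∃ l1 l2 : List (List α), l = l1 ++ l2 ∧ q = l1.flatten.length := by
  intro l
  induction l with
  | nil =>
    intro _ q hq _
    refine ⟨[], [], rfl, ?_⟩
    simpa using Nat.le_zero.mp (by simpa using hq)
  | cons r l ih =>
    intro hl q hq hpre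
    have hqtot : q ≤ r.length + l.flatten.length := by
      simpa using hq
    by_cases hqr : r.length ≤ q
    · -- occurrence is in the tail
      have hdrop : ((r :: l).flatten ++ u).drop q = (l.flatten ++ u).drop (q - r.length) := by
        rw [List.flatten_cons, List.append_assoc, List.drop_append,
          List.drop_eq_nil_of_le hqr, List.nil_append]
      rw [hdrop] at hpre
      obtain ⟨l1, l2, he, hqe⟩ := ih (fun v hv => hl v (List.mem_cons_of_mem _ hv))
        (q - r.length) (by omega) hpre
      refine ⟨r :: l1, l2, by rw [List.cons_append, he], ?_⟩
      simp only [List.flatten_cons, List.length_append]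
      omega
    · have hqlt : q < r.length := lt_of_not_ge hqr
      obtain ⟨z, hz⟩ := lemA h2 l (fun v hv => hl v (List.mem_cons_of_mem _ hv))
      have hdrop : ((r :: l).flatten ++ u).drop q = (r ++ u).drop q ++ z := by
        rw [List.flatten_cons, List.append_assoc, ← hz, ← List.append_assoc,
          List.drop_append, Nat.sub_eq_zero_of_le (by simp; omega),
          List.drop_zero]
      rw [hdrop] at hpre
      have hu : u <+: (r ++ u).drop q := by
        apply prefix_of_prefix_append' hpre
        simp only [List.length_drop, List.length_append]
        omega
      rcases h3 r (hl r (List.mem_cons_self)) q (le_of_lt hqlt) hu with h0 | hlen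
      · exact ⟨[], r :: l, rfl, by simp [h0]⟩
      · omega

private lemma rep_ps (c : List (List α)) (m q : ℕ)
    (h : ∃ l1 l2 : List (List α), powL m c = l1 ++ l2 ∧ q = l1.flatten.length)
    (hq : q < c.flatten.length) :
    ∃ l1 l2 : List (List α), c = l1 ++ l2 ∧ q = l1.flatten.length := by
  obtain ⟨l1, l2, he, hq'⟩ := h
  cases m with
  | zero =>
    rw [powL_zero] at he
    have h1 : l1 = [] := by
      cases l1 with
      | nil => rfl
      | cons a l => simp at he
    refine ⟨[], c, rfl, ?_⟩
    simp [h1] at hq'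
    simpa using hq'
  | succ m =>
    rw [powL_succ] at he
    rcases List.append_eq_append_iff.mp he with ⟨a', hc, _⟩ | ⟨c', hc, _⟩
    · -- l1 = c ++ a' : contradiction with q < |c.flatten|
      exfalso
      rw [hc] at hq'
      simp only [List.flatten_append, List.length_append] at hq'
      omega
    · exact ⟨l1, c', by rw [hc], hq'⟩

private lemma circular_core (u : List α) (R : Set (List α))
    (h2 : ∀ w ∈ R, u <+: w ++ u)
    (h3 : ∀ w ∈ R, ∀ q ≤ w.length, u <+: (w ++ u).drop q → q = 0 ∨ q = w.length) :
    IsCircularCode R := by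
  intro l l' w s t hl hl' hwR hs hws heq
  -- notation
  set m := u.length with hm
  set B : List α := l'.flatten ++ w with hB
  set q : ℕ := l'.flatten.length + t.length with hqdef
  have hslen : 0 < s.length := List.length_pos_iff.mpr hs
  have hwlen : w.length = t.length + s.length := by rw [hws]; simp
  have hqB : q ≤ B.length := by
    simp only [hB, List.length_append]
    omega
  have hqBlt : q < B.length := by
    simp only [hB, List.length_append]
    omega
  have hlflat : l.flatten = s ++ (l'.flatten ++ t) := by
    rw [heq, List.append_assoc]
  have hlflen : 0 < l.flatten.length := by
    rw [hlflat]; simp; omega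
  -- the big list of return words
  set L : List (List α) := powL (m + 1) (l' ++ [w]) with hLdef
  have hLmem : ∀ v ∈ L, v ∈ R := by
    intro v hv
    rw [hLdef, powL] at hv
    rw [List.mem_flatten] at hv
    obtain ⟨c, hc, hvc⟩ := hv
    rw [List.mem_replicate] at hc
    rw [hc.2] at hvc
    rcases List.mem_append.mp hvc with h | h
    · exact hl' v h
    · rw [List.mem_singleton.mp h]; exact hwR
  have hLflat : L.flatten = powL (m + 1) B := by
    rw [hLdef, flatten_powL]
    congr 1
    simp [hB]
  -- the occurrence of u at position q in L.flatten ++ u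
  have hocc : u <+: (L.flatten ++ u).drop q := by
    have hBsplit : B = (l'.flatten ++ t) ++ s := by
      rw [hB, hws, List.append_assoc]
    have e1 : (L.flatten ++ u).drop q = s ++ (powL m B ++ u) := by
      rw [hLflat, powL_succ, List.append_assoc, List.drop_append,
        Nat.sub_eq_zero_of_le hqB, List.drop_zero]
      congr 1
      rw [hBsplit]
      have : q = (l'.flatten ++ t).length := by simp [hqdef]
      rw [this, List.drop_left]
    have e2 : s ++ powL m B = powL m l.flatten ++ s := by
      rw [hBsplit, ← powL_rotate, hlflat]
    have e3 : (L.flatten ++ u).drop q = powL m l.flatten ++ (s ++ u) := by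
      rw [e1, ← List.append_assoc, e2, List.append_assoc]
    rw [e3]
    have hA : u <+: powL m l.flatten ++ u := by
      have := lemA h2 (powL m l) ?_
      · rwa [flatten_powL] at this
      · intro v hv
        rw [powL, List.mem_flatten] at hv
        obtain ⟨c, hc, hvc⟩ := hv
        rw [List.mem_replicate] at hc
        rw [hc.2] at hvc
        exact hl v hvc
    have hA' : u <+: powL m l.flatten := by
      apply prefix_of_prefix_append' hA
      rw [powL_length]
      calc u.length = m * 1 := by omega
        _ ≤ m * l.flatten.length := Nat.mul_le_mul_left m hlflen
    exact hA'.trans (List.prefix_append _ _)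
  -- apply lemB
  have hqtot : q ≤ L.flatten.length := by
    rw [hLflat, powL_succ]
    simp only [List.length_append]
    omega
  obtain ⟨l1, l2, he, hqe⟩ := lemB h2 h3 L hLmem q hqtot hocc
  -- reduce to a partial sum of l' ++ [w]
  have hps : ∃ l1 l2 : List (List α), l' ++ [w] = l1 ++ l2 ∧ q = l1.flatten.length := by
    apply rep_ps (l' ++ [w]) (m + 1) q ⟨l1, l2, by rw [← hLdef, he], hqe⟩
    have : (l' ++ [w]).flatten = B := by simp [hB]
    rw [this]
    exact hqBlt
  obtain ⟨p1, p2, hpe, hqp⟩ := hps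
  -- conclude q ≤ |l'.flatten|
  have hBlen : B.length = l'.flatten.length + w.length := by simp [hB]
  have hqle : q ≤ l'.flatten.length := by
    rcases List.append_eq_append_iff.mp hpe.symm with ⟨a', hc, _⟩ | ⟨c', hc, hc2⟩
    · have hlen : l'.flatten.length = p1.flatten.length + a'.flatten.length := by
        rw [hc]; simp
      omega
    · -- p1 = l' ++ c', [w] = c' ++ p2
      cases c' with
      | nil =>
        have hlen : p1.flatten.length = l'.flatten.length := by rw [hc]; simp
        omega
      | cons v c'' =>
        exfalso
        simp only [List.cons_append] at hc2
        obtain ⟨hv, hnil⟩ := List.cons_eq_cons.mp hc2.symm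
        have hc''0 : c'' = [] := (List.append_eq_nil_iff.mp hnil).1
        have hlen : p1.flatten.length = l'.flatten.length + w.length := by
          rw [hc, hc''0, hv]; simp
        omega
  have : t.length = 0 := by omega
  exact List.length_eq_zero_iff.mp this

end CircularAux

section SubwordAux

variable {A : Type*}

private lemma subword_length (x : ℤ → A) (i : ℤ) (n : ℕ) : (subword x i n).length = n := by
  simp [subword]

private lemma subword_getElem (x : ℤ → A) (i : ℤ) (n : ℕ) (k : ℕ) (hk : k < (subword x i n).length) :
    (subword x i n)[k] = x (i + k) := by
  simp [subword]

private lemma occursAt_iff_subword (x : ℤ → A) (u : List A) (i : ℤ) :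
    occursAt x u i ↔ subword x i u.length = u := by
  constructor
  · intro h
    apply List.ext_getElem (by simp [subword_length])
    intro n h1 h2
    rw [subword_getElem]
    have := h ⟨n, h2⟩
    simpa using this
  · intro h k
    have hk : (k : ℕ) < (subword x i u.length).length := by
      rw [subword_length]; exact k.2
    calc x (i + (k : ℕ)) = (subword x i u.length)[(k : ℕ)] :=
          (subword_getElem x i u.length k hk).symm
      _ = u.get k := by simp [h]

private lemma subword_append (x : ℤ → A) (i : ℤ) (a b : ℕ) :
    subword x i (a + b) = subword x i a ++ subword x (i + a) b := by
  apply List.ext_getElem (by simp [subword_length])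
  intro n h1 h2
  rw [subword_getElem]
  rcases lt_or_ge n a with h | h
  · rw [List.getElem_append_left (by rwa [subword_length])]
    rw [subword_getElem]
  · rw [List.getElem_append_right (by rwa [subword_length])]
    rw [subword_getElem]
    congr 1
    rw [subword_length]
    omega

private lemma subword_take (x : ℤ → A) (i : ℤ) (n m : ℕ) :
    (subword x i n).take m = subword x i (min m n) := by
  apply List.ext_getElem (by simp [subword_length])
  intro k h1 h2
  rw [List.getElem_take, subword_getElem, subword_getElem]

private lemma subword_drop (x : ℤ → A) (i : ℤ) (n q : ℕ) :
    (subword x i n).drop q = subword x (i + q) (n - q) := by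
  apply List.ext_getElem (by simp [subword_length])
  intro k h1 h2
  rw [List.getElem_drop, subword_getElem, subword_getElem]
  congr 1
  push_cast
  ring

end SubwordAux

/-- For a uniformly recurrent x ∈ A^ℤ and a nonempty prefix u of x,
the set of return words to u of x is a circular code. -/
theorem return_words_circular_code {A : Type*} (x : ℤ → A) (u : List A)
    (hur : UniformlyRecurrent x) (hu : u ≠ []) (hpref : occursAt x u 0) :
    IsCircularCode (returnWords x u) := by
  apply circular_core u (returnWords x u)
  case h2 =>
    intro w hw
    obtain ⟨i, j, hij, hoi, hoj, hbet, hweq⟩ := hw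
    set L : ℕ := (j - i).toNat with hLdef
    have hL : (L : ℤ) = j - i := Int.toNat_of_nonneg (by omega)
    have hwu : w ++ u = subword x i (L + u.length) := by
      rw [subword_append, hweq]
      congr 1
      have hji : i + (L : ℤ) = j := by omega
      rw [hji, (occursAt_iff_subword x u j).mp hoj]
    rw [List.prefix_iff_eq_take, hwu, subword_take]
    have hmin : min u.length (L + u.length) = u.length := by omega
    rw [hmin, (occursAt_iff_subword x u i).mp hoi]
  case h3 =>
    intro w hw q hq hpre
    obtain ⟨i, j, hij, hoi, hoj, hbet, hweq⟩ := hw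
    set L : ℕ := (j - i).toNat with hLdef
    have hL : (L : ℤ) = j - i := Int.toNat_of_nonneg (by omega)
    have hwlen : w.length = L := by rw [hweq, subword_length]
    rw [hwlen] at hq
    have hwu : w ++ u = subword x i (L + u.length) := by
      rw [subword_append, hweq]
      congr 1
      have hji : i + (L : ℤ) = j := by omega
      rw [hji, (occursAt_iff_subword x u j).mp hoj]
    rw [hwu, subword_drop] at hpre
    have hocc : occursAt x u (i + q) := by
      rw [occursAt_iff_subword]
      rw [List.prefix_iff_eq_take, subword_take] at hpre
      have hmin : min u.length (L + u.length - q) = u.length := by omega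
      rw [hmin] at hpre
      exact hpre.symm
    by_cases hq0 : q = 0
    · exact Or.inl hq0
    · right
      by_contra hqL
      have h1 : i < i + q := by
        have : 0 < q := Nat.pos_of_ne_zero hq0
        omega
      have h2 : i + q < j := by
        have : q < L := by omega
        omega
      exact hbet (i + q) h1 h2 hocc
    

end PisotDE
end

section
/- Let ξ be a primitive proper substitution on a finite alphabet A and suppose exp(2iπα_1),…,exp(2iπα_{d-1}) are eigenvalues of (Ω_ξ, S, μ) such that 1, α_1,…,α_{d-1} are rationally independent. Let v(i) ∈ ℝ^A and w(i) ∈ ℤ^A satisfy α_i H(1) = v(i) + w(i), M_ξ^t w(i) ∈ ℤ^A and (M_ξ^t)^n v(i) → 0 for each i. Then both families of vectors {M_ξ^t v(1),…,M_ξ^t v(d-1)} and {M_ξ^t H(1), M_ξ^t w(1),…,M_ξ^t w(d-1)} are linearly independent over ℝ. -/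
open MeasureTheory Filter Matrix Set

namespace PisotDE

variable {A B : Type*}

/-- From a nontrivial real relation among integer vectors, extract a nontrivial
rational relation, using a `ℚ`-basis of `ℝ`. -/
lemma exists_rat_relation {ι : Type*} [Fintype ι] {n : Type*} (F : ι → n → ℤ) (c : ι → ℝ)
    (hrel : ∀ a, ∑ i, c i * (F i a : ℝ) = 0) (i₀ : ι) (hc : c i₀ ≠ 0) :
    ∃ q : ι → ℚ, (∃ i, q i ≠ 0) ∧ ∀ a, ∑ i, q i * (F i a : ℚ) = 0 := by
  classical
  set B := Module.Basis.ofVectorSpace ℚ ℝ with hB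
  have hrepr : ∀ a, ∑ i, (F i a : ℚ) • B.repr (c i) = 0 := by
    intro a
    have h0 : (∑ i, (F i a : ℚ) • c i) = 0 := by
      rw [← hrel a]
      refine Finset.sum_congr rfl fun i _ => ?_
      rw [Rat.smul_def]
      push_cast
      ring
    have h1 := congrArg B.repr h0
    simpa [map_sum, _root_.map_smul] using h1
  have hne : B.repr (c i₀) ≠ 0 := by
    intro h
    exact hc (by simpa using (B.repr.map_eq_zero_iff).mp h)
  obtain ⟨b, hb⟩ : ∃ b, B.repr (c i₀) b ≠ 0 := by
    by_contra h
    push_neg at h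
    exact hne (Finsupp.ext h)
  refine ⟨fun i => B.repr (c i) b, ⟨i₀, hb⟩, fun a => ?_⟩
  have h2 := congrArg (fun f : _ →₀ ℚ => f b) (hrepr a)
  simpa [Finsupp.finset_sum_apply, Finsupp.smul_apply, smul_eq_mul, mul_comm] using h2

/-- Clear denominators in a rational relation. -/
lemma exists_int_relation {ι : Type*} [Fintype ι] {n : Type*} (F : ι → n → ℤ) (q : ι → ℚ)
    (hq : ∃ i, q i ≠ 0) (hrel : ∀ a, ∑ i, q i * (F i a : ℚ) = 0) :
    ∃ e : ι → ℤ, (∃ i, e i ≠ 0) ∧ ∀ a, ∑ i, (e i : ℝ) * (F i a : ℝ) = 0 := by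
  classical
  set N : ℕ := ∏ i, (q i).den with hN
  have hNpos : 0 < N := Finset.prod_pos (fun i _ => (q i).pos)
  have hdvd : ∀ i : ι, (q i).den ∣ N := fun i => Finset.dvd_prod_of_mem _ (Finset.mem_univ i)
  set e : ι → ℤ := fun i => (q i).num * ((N / (q i).den : ℕ) : ℤ) with he
  have hcast : ∀ i, ((e i : ℚ)) = q i * N := by
    intro i
    have hden0 : ((q i).den : ℚ) ≠ 0 := Nat.cast_ne_zero.mpr (q i).den_nz
    have hnum : ((q i).num : ℚ) = q i * (q i).den :=
      (div_eq_iff hden0).mp (Rat.num_div_den (q i))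
    have hNd : ((q i).den : ℚ) * ((N / (q i).den : ℕ) : ℚ) = (N : ℚ) := by
      rw [← Nat.cast_mul, Nat.mul_div_cancel' (hdvd i)]
    push_cast [he]
    rw [hnum]
    calc q i * (q i).den * ((N / (q i).den : ℕ) : ℚ)
        = q i * (((q i).den : ℚ) * ((N / (q i).den : ℕ) : ℚ)) := by ring
      _ = q i * N := by rw [hNd]
  refine ⟨e, ?_, ?_⟩
  · obtain ⟨i₁, hi₁⟩ := hq
    refine ⟨i₁, fun h0 => hi₁ ?_⟩
    have h1 : ((e i₁ : ℚ)) = 0 := by rw [h0]; norm_num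
    rw [hcast i₁] at h1
    have hNne : (N : ℚ) ≠ 0 := Nat.cast_ne_zero.mpr hNpos.ne'
    exact (mul_eq_zero.mp h1).resolve_right hNne
  · intro a
    have hQ : ∑ i, (e i : ℚ) * (F i a : ℚ) = 0 := by
      calc ∑ i, (e i : ℚ) * (F i a : ℚ)
          = ∑ i, (N : ℚ) * (q i * (F i a : ℚ)) := by
            refine Finset.sum_congr rfl fun i _ => ?_
            rw [hcast i]; ring
        _ = (N : ℚ) * ∑ i, q i * (F i a : ℚ) := by rw [Finset.mul_sum]
        _ = 0 := by rw [hrel a, mul_zero]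
    have hR := congrArg (fun x : ℚ => (x : ℝ)) hQ
    push_cast [Rat.cast_sum] at hR
    exact_mod_cast hR

/-- The core linear-algebra argument. -/
lemma core_indep {A : Type*} [Fintype A] [DecidableEq A] [Nonempty A] {m : ℕ}
    (α : Fin m → ℝ) (hind : RatIndepOne α)
    (M : Matrix A A ℝ) (L : A → ℝ) (z : Fin m → A → ℝ) (v : Fin m → A → ℝ)
    (hz : ∀ i, z i = α i • L - M.mulVec (v i))
    (hzint : ∀ i a, ∃ t : ℤ, z i a = (t : ℝ))
    (hLint : ∀ a, ∃ t : ℤ, L a = (t : ℝ))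
    (hLb : ∀ (n : ℕ) (a : A), 1 ≤ ((M ^ n).mulVec L) a)
    (hv0 : ∀ i, Tendsto (fun n : ℕ => (M ^ n).mulVec (v i)) atTop (nhds 0)) :
    LinearIndependent ℝ (fun i : Fin m => M.mulVec (v i)) ∧
    LinearIndependent ℝ (Fin.cons L z : Fin (m + 1) → (A → ℝ)) := by
  classical
  obtain ⟨a₀⟩ := ‹Nonempty A›
  have key2 : LinearIndependent ℝ (Fin.cons L z : Fin (m + 1) → (A → ℝ)) := by
    rw [Fintype.linearIndependent_iff]
    intro g hg
    by_contra hcon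
    push_neg at hcon
    obtain ⟨j₀, hj₀⟩ := hcon
    -- the family has integer entries
    have hFex : ∀ (j : Fin (m + 1)) (a : A),
        ∃ t : ℤ, (Fin.cons L z : Fin (m + 1) → A → ℝ) j a = (t : ℝ) := by
      intro j a
      refine Fin.cases ?_ ?_ j
      · rw [Fin.cons_zero]; exact hLint a
      · intro i; rw [Fin.cons_succ]; exact hzint i a
    choose F hF using hFex
    have hgp : ∀ a, ∑ j, g j * (F j a : ℝ) = 0 := by
      intro a
      have h1 := congrFun hg a
      rw [Finset.sum_apply] at h1
      calc ∑ j, g j * (F j a : ℝ)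
          = ∑ j, (g j • (Fin.cons L z : Fin (m+1) → A → ℝ) j) a := by
            refine Finset.sum_congr rfl fun j _ => ?_
            rw [Pi.smul_apply, smul_eq_mul, hF]
        _ = 0 := h1
    obtain ⟨q, hq0, hqrel⟩ := exists_rat_relation F g hgp j₀ hj₀
    obtain ⟨e, he0, herel⟩ := exists_int_relation F q hq0 hqrel
    -- pointwise form with L and z
    have herel' : ∀ a, ((e 0 : ℤ) : ℝ) * L a + ∑ i, ((e i.succ : ℤ) : ℝ) * z i a = 0 := by
      intro a
      have h := herel a
      rw [Fin.sum_univ_succ] at h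
      simp only [← hF, Fin.cons_zero, Fin.cons_succ] at h
      exact h
    have hsum : ((e 0 : ℤ) : ℝ) • L + ∑ i, ((e i.succ : ℤ) : ℝ) • z i = 0 := by
      funext a
      have h := herel' a
      simp only [Pi.add_apply, Pi.smul_apply, Finset.sum_apply, smul_eq_mul, Pi.zero_apply]
      exact h
    set γ : ℝ := ((e 0 : ℤ) : ℝ) + ∑ i, ((e i.succ : ℤ) : ℝ) * α i with hγ
    set y : A → ℝ := ∑ i, ((e i.succ : ℤ) : ℝ) • v i with hy
    have hkey : γ • L = M.mulVec y := by
      have h1 : ∑ i, ((e i.succ : ℤ) : ℝ) • z i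
          = (∑ i, ((e i.succ : ℤ) : ℝ) * α i) • L - M.mulVec y := by
        rw [hy, ← Matrix.mulVecLin_apply, map_sum, Finset.sum_smul, ← Finset.sum_sub_distrib]
        refine Finset.sum_congr rfl fun i _ => ?_
        rw [Matrix.mulVecLin_apply, Matrix.mulVec_smul, hz i, smul_sub, smul_smul]
      rw [h1] at hsum
      have h2 : ((e 0 : ℤ) : ℝ) • L + (∑ i, ((e i.succ : ℤ) : ℝ) * α i) • L - M.mulVec y = 0 := by
        rw [add_sub_assoc]; exact hsum
      rw [hγ, add_smul]
      exact sub_eq_zero.mp h2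
    have hiter : ∀ n : ℕ, γ • (M ^ n).mulVec L = (M ^ (n + 1)).mulVec y := by
      intro n
      calc γ • (M ^ n).mulVec L = (M ^ n).mulVec (γ • L) :=
            (Matrix.mulVec_smul (M ^ n) γ L).symm
        _ = (M ^ n).mulVec (M.mulVec y) := by rw [hkey]
        _ = ((M ^ n) * M).mulVec y := Matrix.mulVec_mulVec y (M ^ n) M
        _ = (M ^ (n + 1)).mulVec y := by rw [← pow_succ]
    have hy0 : Tendsto (fun n => (M ^ (n + 1)).mulVec y) atTop (nhds 0) := by
      have hrep : ∀ n : ℕ, (M ^ (n + 1)).mulVec y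
          = ∑ i, ((e i.succ : ℤ) : ℝ) • (M ^ (n + 1)).mulVec (v i) := by
        intro n
        rw [hy, ← Matrix.mulVecLin_apply, map_sum]
        exact Finset.sum_congr rfl fun i _ => by
          rw [Matrix.mulVecLin_apply, Matrix.mulVec_smul]
      have hterm : ∀ i : Fin m,
          Tendsto (fun n : ℕ => ((e i.succ : ℤ) : ℝ) • (M ^ (n + 1)).mulVec (v i))
            atTop (nhds 0) := by
        intro i
        have h1 : Tendsto (fun n : ℕ => (M ^ (n + 1)).mulVec (v i)) atTop (nhds 0) := by
          have h2 := (hv0 i).comp (tendsto_add_atTop_nat 1)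
          simpa [Function.comp_def] using h2
        simpa using h1.const_smul ((e i.succ : ℤ) : ℝ)
      refine Tendsto.congr (fun n => (hrep n).symm) ?_
      simpa using tendsto_finset_sum Finset.univ (fun i _ => hterm i)
    have hzero : γ = 0 := by
      have heval : Tendsto (fun n => ((M ^ (n + 1)).mulVec y) a₀) atTop (nhds 0) := by
        simpa using (tendsto_pi_nhds.mp hy0) a₀
      have habs : ∀ n : ℕ, |γ| ≤ |((M ^ (n + 1)).mulVec y) a₀| := by
        intro n
        have h := congrFun (hiter n) a₀
        simp only [Pi.smul_apply, smul_eq_mul] at h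
        rw [← h, abs_mul]
        have ht := hLb n a₀
        rw [abs_of_nonneg (by linarith : (0:ℝ) ≤ (M ^ n).mulVec L a₀)]
        nlinarith [abs_nonneg γ]
      have heval' : Tendsto (fun n => |((M ^ (n + 1)).mulVec y) a₀|) atTop (nhds 0) := by
        simpa using heval.abs
      have hle : |γ| ≤ 0 := ge_of_tendsto heval' (Filter.Eventually.of_forall habs)
      exact abs_eq_zero.mp (le_antisymm hle (abs_nonneg γ))
    obtain ⟨h00, hsucc⟩ := hind (e 0) (fun i => e i.succ) (by rw [← hγ]; exact hzero)
    obtain ⟨j, hj⟩ := he0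
    exact hj (Fin.cases h00 hsucc j)
  refine ⟨?_, key2⟩
  rw [Fintype.linearIndependent_iff]
  intro g hg i
  rw [Fintype.linearIndependent_iff] at key2
  have hrel : ∑ j : Fin (m + 1),
      (Fin.cons (∑ k, g k * α k) (fun k => -g k) : Fin (m + 1) → ℝ) j •
        (Fin.cons L z : Fin (m + 1) → (A → ℝ)) j = 0 := by
    rw [Fin.sum_univ_succ]
    simp only [Fin.cons_zero, Fin.cons_succ]
    have hMv : ∀ k, M.mulVec (v k) = α k • L - z k := fun k => by rw [hz k]; abel
    calc (∑ k, g k * α k) • L + ∑ k, (-g k) • z k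
        = ∑ k, g k • (α k • L - z k) := by
          rw [Finset.sum_smul, ← Finset.sum_add_distrib]
          refine Finset.sum_congr rfl fun k _ => ?_
          rw [smul_sub, smul_smul, neg_smul, sub_eq_add_neg]
      _ = ∑ k, g k • M.mulVec (v k) := Finset.sum_congr rfl fun k _ => by rw [hMv k]
      _ = 0 := hg
  have hall := key2 _ hrel i.succ
  rw [Fin.cons_succ] at hall
  exact neg_eq_zero.mp hall


/-- if exp(2iπα_1),…,exp(2iπα_{d-1}) are eigenvalues with
1, α_1, …, α_{d-1} rationally independent, then the families
{M_ξᵗv(1),…,M_ξᵗv(d-1)} and {M_ξᵗH(1), M_ξᵗw(1),…,M_ξᵗw(d-1)} are linearly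
independent over ℝ. -/
theorem eigenvector_families_linearly_independent {A : Type*} [Fintype A] [DecidableEq A]
    [MeasurableSpace A]
    (ξ : A → List A) (hsub : IsSubstitution ξ) (hprim : IsPrimitive ξ)
    (hproper : IsProper ξ)
    (μ : Measure (ℤ → A)) (hμ : IsProbabilityMeasure μ)
    (hinv : MeasurePreserving shift μ μ) (hsupp : μ (Omega ξ) = 1)
    (d : ℕ) (α : Fin (d - 1) → ℝ)
    (heig : ∀ i, IsEigenvalue μ (Complex.exp (2 * Real.pi * Complex.I * (α i))))
    (hind : RatIndepOne α)
    (v : Fin (d - 1) → A → ℝ) (w : Fin (d - 1) → A → ℤ)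
    (hvw : ∀ i, ∀ a : A, α i = v i a + (w i a : ℝ))
    (hwZ : ∀ i, ∀ a : A, ∃ z : ℤ, ((MtR ξ).mulVec fun b => ((w i b : ℤ) : ℝ)) a = (z : ℝ))
    (hv0 : ∀ i, Tendsto (fun n : ℕ => (MtR ξ ^ n).mulVec (v i)) atTop (nhds 0)) :
    LinearIndependent ℝ (fun i : Fin (d - 1) => (MtR ξ).mulVec (v i)) ∧
    LinearIndependent ℝ
      (Fin.cons ((MtR ξ).mulVec fun _ : A => (1 : ℝ))
        (fun i : Fin (d - 1) => (MtR ξ).mulVec fun b => ((w i b : ℤ) : ℝ)) :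
        Fin (d - 1 + 1) → (A → ℝ)) := by
  classical
  have hAne : Nonempty A := by
    by_contra h
    rw [not_nonempty_iff] at h
    have hu : (Set.univ : Set (ℤ → A)) = ∅ :=
      Set.univ_eq_empty_iff.mpr ⟨fun x => h.false (x 0)⟩
    have h1 := hμ.measure_univ
    rw [hu, measure_empty] at h1
    exact zero_ne_one h1
  haveI := hAne
  have hxine : ∀ a, ξ a ≠ [] := by
    intro a hnil
    obtain ⟨N, hN⟩ := Filter.eventually_atTop.mp ((hsub.2 a).eventually_ge_atTop 1)
    have hlen : substIter ξ (N + 1) a = [] := by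
      show wordApply (substIter ξ N) (ξ a) = []
      rw [hnil]
      rfl
    have h2 := hN (N + 1) (Nat.le_succ N)
    rw [hlen] at h2
    simp at h2
  have hentry : ∀ a b, MtR ξ a b = (((ξ a).count b : ℕ) : ℝ) := by
    intro a b
    simp [MtR, incMat, Matrix.transpose_apply, Matrix.map_apply, Matrix.of_apply]
  have hMnonneg : ∀ a b, 0 ≤ MtR ξ a b := fun a b => by rw [hentry]; positivity
  have hstep : ∀ u : A → ℝ, (∀ a, 1 ≤ u a) → ∀ a, 1 ≤ (MtR ξ).mulVec u a := by
    intro u hu a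
    obtain ⟨b₀, hb₀⟩ := List.exists_mem_of_ne_nil _ (hxine a)
    have h0 : 0 < (ξ a).count b₀ := List.count_pos_iff.mpr hb₀
    have h1 : (1 : ℝ) ≤ MtR ξ a b₀ := by
      rw [hentry]
      exact_mod_cast h0
    have hsumform : (MtR ξ).mulVec u a = ∑ b, MtR ξ a b * u b := by
      simp [Matrix.mulVec, dotProduct]
    rw [hsumform]
    calc (1 : ℝ) ≤ MtR ξ a b₀ * u b₀ := by nlinarith [hu b₀]
      _ ≤ ∑ b, MtR ξ a b * u b :=
        Finset.single_le_sum
          (fun b _ => mul_nonneg (hMnonneg a b) (le_trans zero_le_one (hu b)))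
          (Finset.mem_univ b₀)
  have hLb : ∀ (n : ℕ) (a : A),
      1 ≤ ((MtR ξ ^ n).mulVec ((MtR ξ).mulVec fun _ => (1 : ℝ))) a := by
    intro n
    induction n with
    | zero =>
      intro a
      rw [pow_zero, Matrix.one_mulVec]
      exact hstep _ (fun _ => le_refl 1) a
    | succ n ih =>
      intro a
      rw [pow_succ', ← Matrix.mulVec_mulVec]
      exact hstep _ ih a
  have hLint : ∀ a, ∃ t : ℤ, ((MtR ξ).mulVec fun _ => (1 : ℝ)) a = (t : ℝ) := by
    intro a
    refine ⟨∑ b, ((ξ a).count b : ℤ), ?_⟩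
    have hform : ((MtR ξ).mulVec fun _ => (1 : ℝ)) a = ∑ b, (((ξ a).count b : ℕ) : ℝ) := by
      simp [Matrix.mulVec, dotProduct, hentry]
    rw [hform]
    push_cast
    rfl
  have hz : ∀ i, ((MtR ξ).mulVec fun b => ((w i b : ℤ) : ℝ))
      = α i • ((MtR ξ).mulVec fun _ => (1 : ℝ)) - (MtR ξ).mulVec (v i) := by
    intro i
    have hwv : (fun b => ((w i b : ℤ) : ℝ)) = α i • (fun _ : A => (1 : ℝ)) - v i := by
      funext b
      have h := hvw i b
      simp only [Pi.sub_apply, Pi.smul_apply, smul_eq_mul, mul_one]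
      linarith
    rw [hwv, ← Matrix.mulVecLin_apply, map_sub, _root_.map_smul]
    simp only [Matrix.mulVecLin_apply]
  exact core_indep α hind (MtR ξ)
    ((MtR ξ).mulVec fun _ => (1 : ℝ))
    (fun i => (MtR ξ).mulVec fun b => ((w i b : ℤ) : ℝ)) v hz
    (fun i a => hwZ i a) hLint hLb hv0


end PisotDE
end

section
/- Let ξ be a primitive proper substitution on a finite alphabet A (replaced by a power if necessary so that the invariant splitting ℝ^A = E^0 ⊕ E^s ⊕ E^u ⊕ E^b for M_ξ^t exists). Suppose (Ω_ξ, S, μ) admits d−1 eigenvalues exp(2iπα_1),…,exp(2iπα_{d-1}), and let v(i) ∈ ℝ^A, w(i) ∈ ℤ^A satisfy α_i H(1) = v(i) + w(i), M_ξ^t w(i) ∈ ℤ^A, (M_ξ^t)^n v(i) → 0, with each v(i) having no component in E^0. Then the vector space E_ξ = span(v(1),…,v(d-1)) is a subspace of E^s. Moreover, if 1, α_1,…,α_{d-1} are rationally independent, then d − 1 ≤ dim E^s. -/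
open MeasureTheory Filter Matrix Set

namespace PisotDE

variable {A B : Type*}

/-- Column sums of powers of the incidence matrix of a left-proper substitution
are at least 1. -/
lemma colsum_pos {A : Type*} [Fintype A] [DecidableEq A] (ξ : A → List A) (h : A)
    (hh : ∀ b, (ξ b).head? = some h) : ∀ (n : ℕ) (a : A), 1 ≤ ∑ b, (incMat ξ ^ n) b a := by
  have hM : ∀ a, 1 ≤ incMat ξ h a := by
    intro a
    have hm : h ∈ ξ a := by
      have h1 := hh a
      cases hξ : ξ a with
      | nil => rw [hξ] at h1; simp at h1
      | cons x l =>
        rw [hξ] at h1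
        simp only [List.head?_cons, Option.some.injEq] at h1
        rw [← h1]; exact List.mem_cons_self
    have : 0 < (ξ a).count h := List.count_pos_iff.mpr hm
    simpa [incMat] using this
  intro n
  induction n with
  | zero => intro a; simp [Matrix.one_apply]
  | succ n ih =>
    intro a
    rw [pow_succ]
    calc (1 : ℕ) ≤ incMat ξ h a := hM a
      _ ≤ ∑ c, incMat ξ c a :=
        Finset.single_le_sum (f := fun c => incMat ξ c a) (fun _ _ => Nat.zero_le _)
          (Finset.mem_univ h)
      _ ≤ ∑ c, (∑ b, (incMat ξ ^ n) b c) * incMat ξ c a := by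
        apply Finset.sum_le_sum
        intro c _
        exact Nat.le_mul_of_pos_left _ (ih c)
      _ = ∑ b, (incMat ξ ^ n * incMat ξ) b a := by
        simp only [Matrix.mul_apply, Finset.sum_mul]
        rw [Finset.sum_comm]

/-- Entries of powers of `MtR`. -/
lemma mtr_pow_apply {A : Type*} [Fintype A] [DecidableEq A] (ξ : A → List A) (n : ℕ)
    (a b : A) : (MtR ξ ^ n) a b = (((incMat ξ ^ n) b a : ℕ) : ℝ) := by
  have h1 : MtR ξ = ((Nat.castRingHom ℝ).mapMatrix (incMat ξ))ᵀ := rfl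
  rw [h1, ← Matrix.transpose_pow, Matrix.transpose_apply, ← map_pow,
    RingHom.mapMatrix_apply, Matrix.map_apply]
  rfl

/-- If a rational matrix has a nonzero real vector in the kernel of its column map,
it has a nonzero integer one. -/
lemma exists_int_kernel {m : ℕ} {P : Type*} [Fintype P] [DecidableEq P]
    (u : Fin m → P → ℚ) (c : Fin m → ℝ)
    (hker : ∀ p, ∑ i, c i * ((u i p : ℚ) : ℝ) = 0) (hcne : c ≠ 0) :
    ∃ z : Fin m → ℤ, z ≠ 0 ∧ ∀ p, ∑ i, (z i : ℚ) * u i p = 0 := by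
  classical
  set D : Matrix P (Fin m) ℚ := Matrix.of (fun p i => u i p) with hD
  by_cases hk : LinearMap.ker (Matrix.toLin' D) = ⊥
  · exfalso
    obtain ⟨G, hG⟩ := (Matrix.toLin' D).exists_leftInverse_of_injective hk
    set G' := LinearMap.toMatrix' G with hG'
    have hGD : G' * D = 1 := by
      have h1 : Matrix.toLin' (G' * D) = LinearMap.id := by
        rw [Matrix.toLin'_mul, hG', Matrix.toLin'_toMatrix', hG]
      have h2 := congrArg LinearMap.toMatrix' h1
      rwa [LinearMap.toMatrix'_toLin', LinearMap.toMatrix'_id] at h2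
    set φ : ℚ →+* ℝ := Rat.castHom ℝ with hφ
    have hGDR : (G'.map φ) * (D.map φ) = 1 := by
      rw [← Matrix.map_mul, hGD, Matrix.map_one φ (map_zero φ) (map_one φ)]
    have hDc : (D.map φ).mulVec c = 0 := by
      funext p
      simpa [Matrix.mulVec, dotProduct, Matrix.map_apply, hD, mul_comm] using hker p
    apply hcne
    calc c = (1 : Matrix (Fin m) (Fin m) ℝ).mulVec c := (Matrix.one_mulVec c).symm
      _ = ((G'.map φ) * (D.map φ)).mulVec c := by rw [hGDR]
      _ = (G'.map φ).mulVec ((D.map φ).mulVec c) := (Matrix.mulVec_mulVec c _ _).symm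
      _ = 0 := by rw [hDc, Matrix.mulVec_zero]
  · obtain ⟨q, hqmem, hq0⟩ := (Submodule.ne_bot_iff _).mp hk
    have hDq : D.mulVec q = 0 := by
      simpa [Matrix.toLin'_apply] using hqmem
    set z : Fin m → ℤ := fun i => (q i).num * ∏ j ∈ Finset.univ.erase i, ((q j).den : ℤ)
      with hzdef
    have hcast : ∀ i, (z i : ℚ) = q i * ∏ j, ((q j).den : ℚ) := by
      intro i
      have key : q i * ((q i).den : ℚ) = ((q i).num : ℚ) := Rat.mul_den_eq_num (q i)
      calc (z i : ℚ)
          = ((q i).num : ℚ) * ∏ j ∈ Finset.univ.erase i, ((q j).den : ℚ) := by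
            rw [hzdef]; push_cast; ring
        _ = q i * (((q i).den : ℚ) * ∏ j ∈ Finset.univ.erase i, ((q j).den : ℚ)) := by
            rw [← key]; ring
        _ = q i * ∏ j, ((q j).den : ℚ) := by
            congr 1
            exact Finset.mul_prod_erase Finset.univ (fun j => ((q j).den : ℚ))
              (Finset.mem_univ i)
    have hprod : (∏ j, ((q j).den : ℚ)) ≠ 0 :=
      Finset.prod_ne_zero_iff.mpr (fun j _ => Nat.cast_ne_zero.mpr (q j).den_ne_zero)
    refine ⟨z, ?_, ?_⟩
    · obtain ⟨i, hi⟩ : ∃ i, q i ≠ 0 := by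
        by_contra hq; push_neg at hq; exact hq0 (funext hq)
      intro hz
      apply hi
      have h0 : (z i : ℚ) = 0 := by rw [hz]; simp
      rw [hcast i] at h0
      exact (mul_eq_zero.mp h0).resolve_right hprod
    · intro p
      have hD0 : ∑ i, u i p * q i = 0 := by
        have h1 := congrFun hDq p
        simpa [Matrix.mulVec, dotProduct, hD] using h1
      calc ∑ i, (z i : ℚ) * u i p
          = (∏ j, ((q j).den : ℚ)) * ∑ i, u i p * q i := by
            rw [Finset.mul_sum]
            apply Finset.sum_congr rfl
            intro i _
            rw [hcast i]; ring
        _ = 0 := by rw [hD0, mul_zero]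

/-- the span of the vectors v(i) is contained in Eˢ; if moreover
1, α_1, …, α_{d-1} are rationally independent, then d − 1 ≤ dim Eˢ. -/
theorem span_v_subset_stable {A : Type*} [Fintype A] [DecidableEq A]
    [MeasurableSpace A]
    (ξ : A → List A) (hsub : IsSubstitution ξ) (hprim : IsPrimitive ξ)
    (hproper : IsProper ξ)
    (μ : Measure (ℤ → A)) (hμ : IsProbabilityMeasure μ)
    (hinv : MeasurePreserving shift μ μ) (hsupp : μ (Omega ξ) = 1)
    (E0 Es Eu Eb : Submodule ℝ (A → ℝ))
    (hsplit : IsStableSplitting ξ E0 Es Eu Eb)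
    (d : ℕ) (α : Fin (d - 1) → ℝ)
    (heig : ∀ i, IsEigenvalue μ (Complex.exp (2 * Real.pi * Complex.I * (α i))))
    (v : Fin (d - 1) → A → ℝ) (w : Fin (d - 1) → A → ℤ)
    (hvw : ∀ i, ∀ a : A, α i = v i a + (w i a : ℝ))
    (hwZ : ∀ i, ∀ a : A, ∃ z : ℤ, ((MtR ξ).mulVec fun b => ((w i b : ℤ) : ℝ)) a = (z : ℝ))
    (hv0 : ∀ i, Tendsto (fun n : ℕ => (MtR ξ ^ n).mulVec (v i)) atTop (nhds 0))
    (hvE0 : ∀ i, v i ∈ Es ⊔ Eu ⊔ Eb) :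
    Submodule.span ℝ (Set.range v) ≤ Es ∧
      (RatIndepOne α → d - 1 ≤ Module.finrank ℝ Es) := by
  classical
  obtain ⟨hdec, huniq, hEsI, hEuI, hEbI, hE0k, hEsLim, hEuLim, hEbLim⟩ := hsplit
  obtain ⟨⟨hlet, hh⟩, -⟩ := hproper
  -- Part 1: each v i lies in Es.
  have hvmem : ∀ i, v i ∈ Es := by
    intro i
    obtain ⟨y, hy, b, hb, hyb⟩ := Submodule.mem_sup.mp (hvE0 i)
    obtain ⟨s, hs, uu, hu, hsu⟩ := Submodule.mem_sup.mp hy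
    have hdecomp : v i = s + uu + b := by rw [← hyb, ← hsu]
    have hsl : Tendsto (fun n => (MtR ξ ^ n).mulVec s) atTop (nhds 0) := by
      by_cases h0 : s = 0
      · simp [h0, Matrix.mulVec_zero]
      · exact (hEsLim s hs h0).1
    have hbl : ∃ C, ∀ n, ‖(MtR ξ ^ n).mulVec b‖ ≤ C := by
      by_cases h0 : b = 0
      · exact ⟨0, fun n => by simp [h0, Matrix.mulVec_zero]⟩
      · obtain ⟨⟨c, C, hc, hbd⟩, -⟩ := hEbLim b hb h0
        exact ⟨C, fun n => (hbd n).2⟩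
    obtain ⟨C, hC⟩ := hbl
    have huz : uu = 0 := by
      by_contra h0
      have hten := hEuLim uu hu h0
      have hev1 : ∀ᶠ n in atTop, ‖(MtR ξ ^ n).mulVec (v i)‖ < 1 := by
        have h1 : Tendsto (fun n => ‖(MtR ξ ^ n).mulVec (v i)‖) atTop (nhds 0) := by
          simpa using (hv0 i).norm
        exact h1.eventually_lt_const one_pos
      have hev2 : ∀ᶠ n in atTop, ‖(MtR ξ ^ n).mulVec s‖ < 1 := by
        have h1 : Tendsto (fun n => ‖(MtR ξ ^ n).mulVec s‖) atTop (nhds 0) := by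
          simpa using hsl.norm
        exact h1.eventually_lt_const one_pos
      have hev3 := hten.eventually_gt_atTop (1 + 1 + C)
      obtain ⟨n, h1, h2, h3⟩ := (hev1.and (hev2.and hev3)).exists
      have hue : (MtR ξ ^ n).mulVec uu =
          (MtR ξ ^ n).mulVec (v i) - (MtR ξ ^ n).mulVec s - (MtR ξ ^ n).mulVec b := by
        have h4 : uu = v i - s - b := by rw [hdecomp]; abel
        rw [h4, Matrix.mulVec_sub, Matrix.mulVec_sub]
      have hle : ‖(MtR ξ ^ n).mulVec uu‖ ≤ 1 + 1 + C := by
        rw [hue]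
        refine le_trans (norm_sub_le _ _) ?_
        have h4 := norm_sub_le ((MtR ξ ^ n).mulVec (v i)) ((MtR ξ ^ n).mulVec s)
        have h5 := hC n
        linarith [le_of_lt h1, le_of_lt h2]
      linarith [h3]
    have hbz : b = 0 := by
      by_contra h0
      obtain ⟨⟨c, C₂, hc, hbd⟩, -⟩ := hEbLim b hb h0
      have hbe : ∀ n, (MtR ξ ^ n).mulVec b =
          (MtR ξ ^ n).mulVec (v i) - (MtR ξ ^ n).mulVec s := by
        intro n
        have h4 : b = v i - s := by rw [hdecomp, huz]; abel
        rw [h4, Matrix.mulVec_sub]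
      have htend : Tendsto (fun n => (MtR ξ ^ n).mulVec b) atTop (nhds 0) := by
        have h1 := (hv0 i).sub hsl
        simp only [sub_zero] at h1
        simpa [← hbe] using h1
      have h2 : Tendsto (fun n => ‖(MtR ξ ^ n).mulVec b‖) atTop (nhds 0) := by
        simpa using htend.norm
      obtain ⟨n, hn⟩ := (h2.eventually_lt_const hc).exists
      linarith [(hbd n).1]
    rw [hdecomp, huz, hbz]
    simpa using hs
  have hspan : Submodule.span ℝ (Set.range v) ≤ Es :=
    Submodule.span_le.mpr (by rintro x ⟨i, rfl⟩; exact hvmem i)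
  refine ⟨hspan, ?_⟩
  intro hrat
  -- Part 2: linear independence of the v i.
  have hli : LinearIndependent ℝ v := by
    rw [Fintype.linearIndependent_iff]
    intro c hc
    by_contra hcon
    push_neg at hcon
    obtain ⟨i₀, hi₀⟩ := hcon
    have hcne : c ≠ 0 := fun h => hi₀ (by rw [h]; rfl)
    have hva : ∀ i a, v i a = α i - (w i a : ℝ) := by
      intro i a; linarith [hvw i a]
    have hcoord : ∀ a, ∑ i, c i * v i a = 0 := by
      intro a
      have h1 := congrFun hc a
      simpa [Finset.sum_apply, Pi.smul_apply, smul_eq_mul] using h1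
    have hconst : ∀ a : A, ∑ i, c i * (w i a : ℝ) = ∑ i, c i * α i := by
      intro a
      have h1 : ∑ i, (c i * α i - c i * (w i a : ℝ)) = 0 := by
        rw [← hcoord a]
        apply Finset.sum_congr rfl
        intro i _
        rw [hva i a]; ring
      rw [Finset.sum_sub_distrib] at h1
      linarith
    set u : Fin (d - 1) → (A × A) → ℚ := fun i p => (w i p.1 : ℚ) - (w i p.2 : ℚ) with hu
    have hker : ∀ p : A × A, ∑ i, c i * ((u i p : ℚ) : ℝ) = 0 := by
      intro p
      have h1 : ∑ i, c i * ((u i p : ℚ) : ℝ) =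
          ∑ i, (c i * (w i p.1 : ℝ) - c i * (w i p.2 : ℝ)) := by
        apply Finset.sum_congr rfl
        intro i _
        rw [hu]
        push_cast
        ring
      rw [h1, Finset.sum_sub_distrib, hconst p.1, hconst p.2, sub_self]
    obtain ⟨z, hz0, hzker⟩ := exists_int_kernel u c hker hcne
    have hzconst : ∀ a b : A, ∑ i, (z i : ℝ) * (w i a : ℝ) = ∑ i, (z i : ℝ) * (w i b : ℝ) := by
      intro a b
      have h1 := hzker (a, b)
      have h2 : ((∑ i, (z i : ℚ) * u i (a, b) : ℚ) : ℝ) = 0 := by rw [h1]; exact Rat.cast_zero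
      rw [hu] at h2
      push_cast at h2
      have h3 : ∑ i, ((z i : ℝ) * (w i a : ℝ) - (z i : ℝ) * (w i b : ℝ)) = 0 := by
        rw [← h2]
        apply Finset.sum_congr rfl
        intro i _
        ring
      rw [Finset.sum_sub_distrib] at h3
      linarith
    set γ : ℤ := ∑ i, z i * w i hlet with hγ
    set t : ℝ := ∑ i, (z i : ℝ) * α i - (γ : ℝ) with ht
    have htne : t ≠ 0 := by
      intro h0
      have heq : ((-γ : ℤ) : ℝ) + ∑ i, (z i : ℝ) * α i = 0 := by
        push_cast
        rw [ht] at h0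
        linarith
      obtain ⟨-, hz⟩ := hrat (-γ) z heq
      exact hz0 (funext hz)
    set e : A → ℝ := fun _ => 1 with he
    have hγR : (γ : ℝ) = ∑ i, (z i : ℝ) * (w i hlet : ℝ) := by rw [hγ]; push_cast; rfl
    have hsum : ∑ i, (z i : ℝ) • v i = t • e := by
      funext a
      simp only [Finset.sum_apply, Pi.smul_apply, smul_eq_mul, he]
      calc ∑ i, (z i : ℝ) * v i a
          = ∑ i, ((z i : ℝ) * α i - (z i : ℝ) * (w i a : ℝ)) := by
            apply Finset.sum_congr rfl
            intro i _
            rw [hva i a]; ring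
        _ = ∑ i, (z i : ℝ) * α i - ∑ i, (z i : ℝ) * (w i a : ℝ) := Finset.sum_sub_distrib _ _
        _ = ∑ i, (z i : ℝ) * α i - (γ : ℝ) := by rw [hγR, hzconst a hlet]
        _ = t * 1 := by rw [ht, mul_one]
    have hlim : Tendsto (fun n => (MtR ξ ^ n).mulVec (t • e)) atTop (nhds 0) := by
      have hmv : ∀ n, (MtR ξ ^ n).mulVec (t • e) =
          ∑ i, (z i : ℝ) • (MtR ξ ^ n).mulVec (v i) := by
        intro n
        rw [← hsum, ← Matrix.mulVecLin_apply, map_sum]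
        apply Finset.sum_congr rfl
        intro i _
        rw [LinearMap.map_smul, Matrix.mulVecLin_apply]
      have h1 : Tendsto (fun n => ∑ i, (z i : ℝ) • (MtR ξ ^ n).mulVec (v i)) atTop
          (nhds (∑ i : Fin (d - 1), (0 : A → ℝ))) := by
        apply tendsto_finset_sum
        intro i _
        simpa using ((hv0 i).const_smul ((z i : ℝ)))
      simp only [Finset.sum_const_zero] at h1
      simpa [hmv] using h1
    have hlim2 : Tendsto (fun n => ((MtR ξ ^ n).mulVec (t • e)) hlet) atTop (nhds 0) := by
      have := tendsto_pi_nhds.mp hlim hlet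
      simpa using this
    have hge : ∀ n, (1 : ℝ) ≤ (MtR ξ ^ n).mulVec e hlet := by
      intro n
      have hcol := colsum_pos ξ hlet hh n hlet
      have heval : (MtR ξ ^ n).mulVec e hlet = ∑ b, (((incMat ξ ^ n) b hlet : ℕ) : ℝ) := by
        simp [Matrix.mulVec, dotProduct, mtr_pow_apply, he]
      rw [heval]
      exact_mod_cast hcol
    have habs : ∀ n, |t| ≤ |((MtR ξ ^ n).mulVec (t • e)) hlet| := by
      intro n
      have h1 : ((MtR ξ ^ n).mulVec (t • e)) hlet = t * ((MtR ξ ^ n).mulVec e hlet) := by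
        rw [Matrix.mulVec_smul]
        simp
      rw [h1, abs_mul]
      have h2 : 1 ≤ |(MtR ξ ^ n).mulVec e hlet| := le_trans (hge n) (le_abs_self _)
      exact le_mul_of_one_le_right (abs_nonneg t) h2
    have h3 : Tendsto (fun n => |((MtR ξ ^ n).mulVec (t • e)) hlet|) atTop (nhds 0) := by
      simpa using hlim2.abs
    obtain ⟨n, hn⟩ := (h3.eventually_lt_const (abs_pos.mpr htne)).exists
    linarith [habs n]
  have hcard := finrank_span_eq_card hli
  calc d - 1 = Module.finrank ℝ (Submodule.span ℝ (Set.range v)) := by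
        rw [hcard, Fintype.card_fin]
    _ ≤ Module.finrank ℝ Es := Submodule.finrank_mono hspan

end PisotDE
end
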